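/- arXiv:1602.02372 — 2 statements merged into one kernel-verified Lean document; each statement's English description precedes it below -/
import Mathlib

section
/- The N-dimensional demihypercube (N ≥ 4) has exactly 2^{N-1} + 2N facets: 2N facets supported on the hyperplanes α_i = ±1/2, and 2^{N-1} facets supported on the hyperplanes H_I = 1 for I of even cardinality. -/
open Finset

/-- Vertex `v_I` of the hypercube `[-1/2,1/2]^N`. -/
noncomputable def vtx {N : ℕ} (I : Finset (Fin N)) : Fin N → ℝ :=
  fun i => if i ∈ I then 1/2 else -(1/2)

/-- The affine function `H_I(α) = Σ_{j∉I}(1/2 + α_j) + Σ_{i∈I}(1/2 - α_i)`. -/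
noncomputable def Hfun {N : ℕ} (I : Finset (Fin N)) (α : Fin N → ℝ) : ℝ :=
  ∑ j ∈ Iᶜ, (1/2 + α j) + ∑ i ∈ I, (1/2 - α i)

/-- The demihypercube: convex hull of the odd vertices of `[-1/2,1/2]^N`. -/
noncomputable def demicube (N : ℕ) : Set (Fin N → ℝ) :=
  convexHull ℝ {x : Fin N → ℝ | ∃ I : Finset (Fin N), Odd I.card ∧ x = vtx I}

/-- The facets of the demihypercube: exposed faces of affine dimension `N-1`. -/
noncomputable def demicubeFacets (N : ℕ) : Set (Set (Fin N → ℝ)) :=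
  {F | IsExposed ℝ (demicube N) F ∧ F.Nonempty ∧ F ≠ demicube N ∧
    Module.finrank ℝ (vectorSpan ℝ F) = N - 1}

namespace Demi

variable {N : ℕ}

noncomputable def lfun (c : Fin N → ℝ) : (Fin N → ℝ) →ₗ[ℝ] ℝ where
  toFun x := ∑ i, c i * x i
  map_add' x y := by simp [mul_add, Finset.sum_add_distrib]
  map_smul' r x := by
    simp only [Pi.smul_apply, smul_eq_mul, RingHom.id_apply, Finset.mul_sum]
    exact Finset.sum_congr rfl fun i _ => by ring

@[simp] lemma lfun_apply (c x : Fin N → ℝ) : lfun c x = ∑ i, c i * x i := rfl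

@[simp] lemma vtx_apply (J : Finset (Fin N)) (i : Fin N) :
    vtx J i = if i ∈ J then 1/2 else -(1/2) := rfl

lemma lfun_single (c : Fin N → ℝ) (a : Fin N) : lfun c (Pi.single a 1) = c a := by
  rw [lfun_apply]
  rw [Finset.sum_eq_single a]
  · simp
  · intro b _ hb; simp [Pi.single_apply, hb]
  · simp

def oddF (N : ℕ) : Finset (Finset (Fin N)) := univ.filter fun J => Odd J.card

lemma mem_oddF {J : Finset (Fin N)} : J ∈ oddF N ↔ Odd J.card := by simp [oddF]

noncomputable def oddV (N : ℕ) : Finset (Fin N → ℝ) := (oddF N).image vtx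

lemma demicube_eq : demicube N = convexHull ℝ ↑(oddV N) := by
  unfold demicube
  congr 1
  ext x
  simp only [Set.mem_setOf_eq, oddV, coe_image, Set.mem_image, mem_coe, mem_oddF]
  constructor
  · rintro ⟨I, hI, rfl⟩; exact ⟨I, hI, rfl⟩
  · rintro ⟨I, hI, rfl⟩; exact ⟨I, hI, rfl⟩

lemma vtx_mem_demicube {J : Finset (Fin N)} (hJ : Odd J.card) : vtx J ∈ demicube N :=
  subset_convexHull ℝ _ ⟨J, hJ, rfl⟩

lemma lfun_vtx (c : Fin N → ℝ) (J : Finset (Fin N)) :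
    lfun c (vtx J) = ∑ i ∈ J, c i - (∑ i, c i) / 2 := by
  rw [lfun_apply]
  have h : ∀ i, c i * vtx J i = (if i ∈ J then c i else 0) - c i / 2 := by
    intro i
    by_cases hi : i ∈ J <;> simp [vtx, hi] <;> ring
  rw [Finset.sum_congr rfl fun i _ => h i, Finset.sum_sub_distrib]
  congr 1
  · rw [Finset.sum_ite_mem, Finset.univ_inter]
  · rw [Finset.sum_div]

noncomputable def sgn (I : Finset (Fin N)) : Fin N → ℝ := fun i => if i ∈ I then 1 else -1

lemma lfun_sgn_apply (I : Finset (Fin N)) (x : Fin N → ℝ) :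
    lfun (sgn I) x = ∑ i ∈ I, x i - ∑ i ∈ Iᶜ, x i := by
  rw [lfun_apply, ← Finset.sum_add_sum_compl I fun i => sgn I i * x i]
  congr 1
  · exact Finset.sum_congr rfl fun i hi => by simp [sgn, hi]
  · rw [← Finset.sum_neg_distrib]
    exact Finset.sum_congr rfl fun i hi => by
      simp only [Finset.mem_compl] at hi; simp [sgn, hi]

lemma Hfun_eq (I : Finset (Fin N)) (x : Fin N → ℝ) :
    Hfun I x = N / 2 - lfun (sgn I) x := by
  rw [lfun_sgn_apply, Hfun]
  rw [Finset.sum_add_distrib, Finset.sum_sub_distrib]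
  have hcard : (Iᶜ.card : ℝ) * (1/2) + I.card * (1/2) = N / 2 := by
    have := Finset.card_add_card_compl I
    have : ((I.card : ℝ) + Iᶜ.card) = N := by
      rw_mod_cast [Finset.card_add_card_compl I]; simp
    nlinarith [this]
  simp only [Finset.sum_const, nsmul_eq_mul]
  ring_nf
  nlinarith [hcard]

lemma Hfun_vtx (I J : Finset (Fin N)) :
    Hfun I (vtx J) = ((symmDiff I J).card : ℝ) := by
  rw [Hfun]
  have h1 : ∑ j ∈ Iᶜ, (1/2 + vtx J j) = ((J \ I).card : ℝ) := by
    calc ∑ j ∈ Iᶜ, (1/2 + vtx J j) = ∑ j ∈ Iᶜ, (if j ∈ J then (1:ℝ) else 0) := by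
          refine Finset.sum_congr rfl fun j _ => ?_
          by_cases hj : j ∈ J <;> simp [vtx, hj] <;> norm_num
      _ = ∑ j ∈ Iᶜ ∩ J, (1:ℝ) := Finset.sum_ite_mem _ _ _
      _ = ((J \ I).card : ℝ) := by
          rw [Finset.sum_const]
          have : Iᶜ ∩ J = J \ I := by ext k; simp [Finset.mem_sdiff, and_comm]
          simp [this]
  have h2 : ∑ i ∈ I, (1/2 - vtx J i) = ((I \ J).card : ℝ) := by
    calc ∑ i ∈ I, (1/2 - vtx J i) = ∑ i ∈ I, (if i ∈ Jᶜ then (1:ℝ) else 0) := by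
          refine Finset.sum_congr rfl fun i _ => ?_
          by_cases hi : i ∈ J <;> simp [vtx, hi] <;> norm_num
      _ = ∑ i ∈ I ∩ Jᶜ, (1:ℝ) := Finset.sum_ite_mem _ _ _
      _ = ((I \ J).card : ℝ) := by
          rw [Finset.sum_const]
          have : I ∩ Jᶜ = I \ J := by ext k; simp [Finset.mem_sdiff]
          simp [this]
  rw [h1, h2]
  have : symmDiff I J = (I \ J) ∪ (J \ I) := rfl
  rw [this, Finset.card_union_of_disjoint (disjoint_sdiff_sdiff)]
  push_cast
  ring

-- generic face-of-hull lemma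
lemma hull_inter_eq (s : Finset (Fin N → ℝ)) (ℓ : (Fin N → ℝ) →ₗ[ℝ] ℝ) (b : ℝ)
    (hb : ∀ v ∈ s, ℓ v ≤ b) :
    convexHull ℝ ↑s ∩ {x | ℓ x = b}
      = convexHull ℝ ↑(s.filter fun v => ℓ v = b) := by
  apply Set.Subset.antisymm
  · rintro x ⟨hx, hxb⟩
    rw [Finset.convexHull_eq] at hx
    obtain ⟨w, hw0, hw1, hwx⟩ := hx
    have hkey : ∀ y ∈ s, w y ≠ 0 → ℓ y = b := by
      intro y hy hwy
      by_contra hne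
      have hlt : ℓ y < b := lt_of_le_of_ne (hb y hy) hne
      have hwy' : 0 < w y := lt_of_le_of_ne (hw0 y hy) (Ne.symm hwy)
      -- ℓ x = ∑ w y * ℓ y < b
      have hℓx : ℓ x = ∑ y ∈ s, w y * ℓ y := by
        rw [← hwx, Finset.centerMass]
        simp [hw1, map_sum, map_smul, smul_eq_mul, mul_comm]
      have hsum : ∑ y ∈ s, w y * ℓ y < b := by
        calc ∑ y ∈ s, w y * ℓ y < ∑ y ∈ s, w y * b := by
              apply Finset.sum_lt_sum
              · intro i hi
                exact mul_le_mul_of_nonneg_left (hb i hi) (hw0 i hi)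
              · exact ⟨y, hy, by nlinarith⟩
          _ = b := by rw [← Finset.sum_mul, hw1, one_mul]
      simp only [Set.mem_setOf_eq] at hxb
      rw [hℓx] at hxb; linarith
    -- x is centerMass over filtered set
    have h1 : (s.filter fun y => w y ≠ 0) ⊆ s.filter fun v => ℓ v = b := by
      intro y hy
      rw [Finset.mem_filter] at hy ⊢
      exact ⟨hy.1, hkey y hy.1 hy.2⟩
    have hx' : (s.filter fun y => w y ≠ 0).centerMass w id = x := by
      rw [Finset.centerMass_filter_ne_zero, hwx]
    rw [← hx']
    apply Finset.centerMass_mem_convexHull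
    · intro i hi; exact hw0 i (Finset.mem_filter.mp hi).1
    · rw [Finset.sum_filter_ne_zero, hw1]; norm_num
    · intro i hi
      exact Finset.mem_coe.mpr (h1 hi)
  · apply Set.subset_inter
    · exact convexHull_mono (by intro y hy; exact Finset.mem_coe.mpr (Finset.mem_filter.mp hy).1)
    · apply convexHull_min
      · intro y hy
        exact (Finset.mem_filter.mp hy).2
      · exact convex_hyperplane (LinearMap.isLinear ℓ) b



lemma demicube_le {c : Fin N → ℝ} {b : ℝ} (h : ∀ J, Odd J.card → lfun c (vtx J) ≤ b) :
    ∀ x ∈ demicube N, lfun c x ≤ b := by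
  intro x hx
  have hsub : {x : Fin N → ℝ | ∃ I : Finset (Fin N), Odd I.card ∧ x = vtx I}
      ⊆ {x | lfun c x ≤ b} := by
    rintro y ⟨I, hI, rfl⟩; exact h I hI
  exact convexHull_min hsub (convex_halfSpace_le (LinearMap.isLinear (lfun c)) b) hx

lemma face_eq_hull {c : Fin N → ℝ} {b : ℝ} (h : ∀ J, Odd J.card → lfun c (vtx J) ≤ b) :
    demicube N ∩ {x | lfun c x = b}
      = convexHull ℝ ↑(((oddF N).filter fun J => lfun c (vtx J) = b).image vtx) := by
  rw [demicube_eq]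
  have h2 : ∀ v ∈ oddV N, lfun c v ≤ b := by
    rintro v hv
    obtain ⟨J, hJ, rfl⟩ := Finset.mem_image.mp hv
    exact h J (mem_oddF.mp hJ)
  rw [hull_inter_eq (oddV N) (lfun c) b h2]
  congr 1
  rw [oddV, Finset.filter_image]

lemma isExposed_face (c : Fin N → ℝ) (b : ℝ) (hb : ∀ x ∈ demicube N, lfun c x ≤ b) :
    IsExposed ℝ (demicube N) (demicube N ∩ {x | lfun c x = b}) := by
  rintro ⟨x₀, hx₀, hx₀b⟩
  refine ⟨LinearMap.toContinuousLinearMap (lfun c), ?_⟩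
  simp only [Set.mem_setOf_eq] at hx₀b
  ext x
  simp only [Set.mem_inter_iff, Set.mem_setOf_eq, LinearMap.coe_toContinuousLinearMap']
  constructor
  · rintro ⟨hx, hxb⟩
    exact ⟨hx, fun y hy => by rw [hxb]; exact hb y hy⟩
  · rintro ⟨hx, hmax⟩
    exact ⟨hx, le_antisymm (hb x hx) (hx₀b ▸ hmax x₀ hx₀)⟩

lemma oddF_nonempty (hN : 0 < N) : (oddF N).Nonempty := by
  refine ⟨{⟨0, hN⟩}, ?_⟩
  rw [mem_oddF, Finset.card_singleton]
  exact odd_one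

lemma exposed_eq_face (hN : 0 < N) {F : Set (Fin N → ℝ)}
    (hF : IsExposed ℝ (demicube N) F) (hne : F.Nonempty) :
    ∃ c : Fin N → ℝ, ∃ b : ℝ, (∀ J, Odd J.card → lfun c (vtx J) ≤ b) ∧
      (∃ J, Odd J.card ∧ lfun c (vtx J) = b) ∧
      F = demicube N ∩ {x | lfun c x = b} := by
  obtain ⟨l, hl⟩ := hF hne
  set c : Fin N → ℝ := fun i => l (Pi.single i 1) with hc
  have hlc : ∀ x, l x = lfun c x := by
    intro x
    have hx : x = ∑ i, x i • (Pi.single i (1:ℝ) : Fin N → ℝ) := by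
      funext j
      simp [Finset.sum_apply, Pi.single_apply]
    calc l x = l (∑ i, x i • (Pi.single i (1:ℝ) : Fin N → ℝ)) := by rw [← hx]
      _ = ∑ i, x i * l (Pi.single i 1) := by
          rw [map_sum]; exact Finset.sum_congr rfl fun i _ => by rw [map_smul, smul_eq_mul]
      _ = lfun c x := by rw [lfun_apply]; exact Finset.sum_congr rfl fun i _ => mul_comm _ _
  set vals := (oddF N).image fun J => lfun c (vtx J) with hvals
  have hvne : vals.Nonempty := (oddF_nonempty hN).image _
  set b := vals.max' hvne with hb
  have hub : ∀ J, Odd J.card → lfun c (vtx J) ≤ b :=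
    fun J hJ => Finset.le_max' vals _ (Finset.mem_image_of_mem _ (mem_oddF.mpr hJ))
  obtain ⟨Jm, hJm, hJmb⟩ := Finset.mem_image.mp (vals.max'_mem hvne)
  rw [← hb] at hJmb
  refine ⟨c, b, hub, ⟨Jm, mem_oddF.mp hJm, hJmb⟩, ?_⟩
  rw [hl]
  ext x
  simp only [Set.mem_setOf_eq, Set.mem_inter_iff]
  constructor
  · rintro ⟨hx, hmax⟩
    refine ⟨hx, le_antisymm (by rw [← hlc]; exact (hlc x) ▸ demicube_le hub x hx) ?_⟩
    · rw [← hJmb, ← hlc, ← hlc x]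
      exact hmax _ (vtx_mem_demicube (mem_oddF.mp hJm))
  · rintro ⟨hx, hxb⟩
    refine ⟨hx, fun y hy => ?_⟩
    rw [hlc, hlc, hxb]
    exact demicube_le hub y hy


noncomputable def e (a : Fin N) : Fin N → ℝ := Pi.single a 1

lemma lfun_single_apply (i : Fin N) (x : Fin N → ℝ) :
    lfun (Pi.single i 1) x = x i := by
  rw [lfun_apply, Finset.sum_eq_single i]
  · simp
  · intro b _ hb; simp [Pi.single_apply, hb.symm]
  · simp

lemma pi_sum_e (x : Fin N → ℝ) : x = ∑ a, x a • e a := by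
  funext j
  simp [e, Finset.sum_apply, Pi.single_apply]

lemma vectorSpan_convexHull' (s : Set (Fin N → ℝ)) :
    vectorSpan ℝ (convexHull ℝ s) = vectorSpan ℝ s := by
  rw [← direction_affineSpan, affineSpan_convexHull, direction_affineSpan]

lemma vectorSpan_le_ker {s : Set (Fin N → ℝ)} {c : Fin N → ℝ} {b : ℝ}
    (h : ∀ x ∈ s, lfun c x = b) : vectorSpan ℝ s ≤ LinearMap.ker (lfun c) := by
  rw [vectorSpan_def]
  apply Submodule.span_le.mpr
  rintro v hv
  rw [Set.mem_vsub] at hv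
  obtain ⟨p, hp, q, hq, rfl⟩ := hv
  simp only [SetLike.mem_coe, LinearMap.mem_ker, vsub_eq_sub, map_sub, h p hp, h q hq, sub_self]

lemma surj_lfun {c : Fin N → ℝ} (hc : c ≠ 0) : Function.Surjective (lfun c) := by
  obtain ⟨i, hi⟩ : ∃ i, c i ≠ 0 := by
    by_contra h; push_neg at h; exact hc (funext h)
  intro r
  refine ⟨(r / c i) • (Pi.single i (1:ℝ) : Fin N → ℝ), ?_⟩
  rw [map_smul, lfun_single, smul_eq_mul, div_mul_cancel₀ r hi]

lemma finrank_ker_lfun {c : Fin N → ℝ} (hc : c ≠ 0) :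
    Module.finrank ℝ (LinearMap.ker (lfun c)) = N - 1 := by
  have h := LinearMap.finrank_range_add_finrank_ker (lfun c)
  rw [LinearMap.range_eq_top.mpr (surj_lfun hc), finrank_top] at h
  simp only [Module.finrank_self, Module.finrank_pi, Fintype.card_fin] at h
  omega

lemma ker_single_le {i : Fin N} {M : Submodule ℝ (Fin N → ℝ)}
    (h : ∀ a, a ≠ i → e a ∈ M) : LinearMap.ker (lfun (Pi.single i 1)) ≤ M := by
  intro x hx
  rw [LinearMap.mem_ker, lfun_single_apply] at hx
  rw [pi_sum_e x]
  apply Submodule.sum_mem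
  intro a _
  by_cases ha : a = i
  · subst ha; rw [hx]; simp
  · exact Submodule.smul_mem _ _ (h a ha)

lemma e_mem_of_pairs {a b c : Fin N} {M : Submodule ℝ (Fin N → ℝ)}
    (h1 : e a + e b ∈ M) (h2 : e a + e c ∈ M) (h3 : e b + e c ∈ M) : e a ∈ M := by
  have : e a = (2⁻¹ : ℝ) • ((e a + e b) + (e a + e c) - (e b + e c)) := by
    rw [show (e a + e b) + (e a + e c) - (e b + e c) = (2:ℝ) • e a by
      rw [two_smul]; abel]
    rw [smul_smul]; norm_num
  rw [this]
  exact Submodule.smul_mem _ _ (Submodule.sub_mem _ (Submodule.add_mem _ h1 h2) h3)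

lemma sum_e_apply (S : Finset (Fin N)) (p : Fin N) :
    (∑ a ∈ S, e a) p = if p ∈ S then 1 else 0 := by
  rw [Finset.sum_apply]
  simp [e, Pi.single_apply]

lemma vtx_sub_vtx (J K : Finset (Fin N)) :
    vtx K - vtx J = ∑ a ∈ K \ J, e a - ∑ a ∈ J \ K, e a := by
  funext p
  simp only [Pi.sub_apply, vtx_apply, sum_e_apply, Finset.mem_sdiff]
  by_cases hK : p ∈ K <;> by_cases hJ : p ∈ J <;> simp [hK, hJ] <;> norm_num

lemma card_symmDiff_add (A B : Finset (Fin N)) :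
    (symmDiff A B).card + 2 * (A ∩ B).card = A.card + B.card := by
  have h1 : (symmDiff A B) = (A \ B) ∪ (B \ A) := rfl
  rw [h1, Finset.card_union_of_disjoint disjoint_sdiff_sdiff]
  have h2 := Finset.card_sdiff_add_card_inter A B
  have h3 := Finset.card_sdiff_add_card_inter B A
  rw [Finset.inter_comm B A] at h3
  omega

lemma card_triple {i a b : Fin N} (h1 : i ≠ a) (h2 : i ≠ b) (h3 : a ≠ b) :
    ({i, a, b} : Finset (Fin N)).card = 3 := by
  rw [Finset.card_insert_of_notMem (by simp [h1, h2]),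
      Finset.card_insert_of_notMem (by simp [h3]), Finset.card_singleton]

lemma triple_sdiff_single {i a b : Fin N} (h1 : a ≠ i) (h2 : b ≠ i) :
    ({i, a, b} : Finset (Fin N)) \ {i} = {a, b} := by
  ext p
  simp only [Finset.mem_sdiff, Finset.mem_insert, Finset.mem_singleton]
  constructor
  · rintro ⟨h | h | h, hne⟩ <;> tauto
  · rintro (rfl | rfl) <;> tauto

lemma single_sdiff_triple {i a b : Fin N} (hia : i ≠ a) (hib : i ≠ b) :
    ({i} : Finset (Fin N)) \ {i, a, b} = ∅ := by
  ext p
  simp only [Finset.mem_sdiff, Finset.mem_singleton, Finset.mem_insert, Finset.notMem_empty,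
    iff_false, not_and]
  rintro rfl h
  exact h (Or.inl rfl)

def Sp (i : Fin N) : Finset (Finset (Fin N)) := (oddF N).filter fun J => i ∈ J
def Sm (i : Fin N) : Finset (Finset (Fin N)) := (oddF N).filter fun J => i ∉ J

lemma vtx_triple_sub_vtx_single {i a b : Fin N} (h1 : i ≠ a) (h2 : i ≠ b) (h3 : a ≠ b) :
    vtx {i, a, b} - vtx {i} = e a + e b := by
  rw [vtx_sub_vtx, triple_sdiff_single h1.symm h2.symm,
    show ({i} : Finset (Fin N)) \ {i,a,b} = ∅ from single_sdiff_triple h1 h2]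
  rw [Finset.sum_pair h3, Finset.sum_empty, sub_zero]

lemma pair_mem_Sp {i x y : Fin N} (hxi : i ≠ x) (hyi : i ≠ y) (hxy : x ≠ y) :
    e x + e y ∈ vectorSpan ℝ (↑((Sp i).image vtx) : Set (Fin N → ℝ)) := by
  have h1 : vtx {i, x, y} ∈ (↑((Sp i).image vtx) : Set (Fin N → ℝ)) := by
    refine Finset.mem_coe.mpr (Finset.mem_image_of_mem vtx ?_)
    rw [Sp, Finset.mem_filter, mem_oddF, card_triple hxi hyi hxy]
    exact ⟨⟨1, rfl⟩, by simp⟩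
  have h2 : vtx {i} ∈ (↑((Sp i).image vtx) : Set (Fin N → ℝ)) := by
    refine Finset.mem_coe.mpr (Finset.mem_image_of_mem vtx ?_)
    rw [Sp, Finset.mem_filter, mem_oddF, Finset.card_singleton]
    exact ⟨odd_one, by simp⟩
  have := vsub_mem_vectorSpan ℝ h1 h2
  rwa [vsub_eq_sub, vtx_triple_sub_vtx_single hxi hyi hxy] at this

lemma exists_two_outside (hN : 4 ≤ N) (i a : Fin N) :
    ∃ b c : Fin N, b ≠ c ∧ b ≠ i ∧ b ≠ a ∧ c ≠ i ∧ c ≠ a := by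
  have hcard : 1 < (Finset.univ \ {i, a} : Finset (Fin N)).card := by
    have h1 : ({i, a} : Finset (Fin N)).card ≤ 2 := Finset.card_insert_le _ _ |>.trans (by simp)
    have h2 := Finset.card_sdiff_of_subset (Finset.subset_univ ({i, a} : Finset (Fin N)))
    rw [Finset.card_univ, Fintype.card_fin] at h2
    omega
  obtain ⟨b, hb, c, hc, hbc⟩ := Finset.one_lt_card.mp hcard
  simp only [Finset.mem_sdiff, Finset.mem_univ, true_and, Finset.mem_insert,
    Finset.mem_singleton, not_or] at hb hc
  exact ⟨b, c, hbc, hb.1, hb.2, hc.1, hc.2⟩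

lemma vectorSpan_Sp (hN : 4 ≤ N) (i : Fin N) :
    vectorSpan ℝ (↑((Sp i).image vtx) : Set (Fin N → ℝ))
      = LinearMap.ker (lfun (Pi.single i 1)) := by
  apply le_antisymm
  · apply vectorSpan_le_ker (b := 1/2)
    rintro x hx
    obtain ⟨J, hJ, rfl⟩ := Finset.mem_image.mp (Finset.mem_coe.mp hx)
    rw [lfun_single_apply, vtx_apply, if_pos (Finset.mem_filter.mp hJ).2]
  · apply ker_single_le
    intro a ha
    obtain ⟨b, c, hbc, hbi, hba, hci, hca⟩ := exists_two_outside hN i a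
    exact e_mem_of_pairs
      (pair_mem_Sp (Ne.symm ha) hbi.symm (Ne.symm hba))
      (pair_mem_Sp (Ne.symm ha) hci.symm (Ne.symm hca))
      (pair_mem_Sp hbi.symm hci.symm hbc)

lemma pair_mem_Sm {i x y z : Fin N} (hxi : x ≠ i) (hyi : y ≠ i) (hzi : z ≠ i)
    (hxy : x ≠ y) (hxz : x ≠ z) (hyz : y ≠ z) :
    e x + e y ∈ vectorSpan ℝ (↑((Sm i).image vtx) : Set (Fin N → ℝ)) := by
  have hperm : ({x, y, z} : Finset (Fin N)) = {z, x, y} := by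
    ext p
    simp only [Finset.mem_insert, Finset.mem_singleton]
    tauto
  have h1 : vtx {z, x, y} ∈ (↑((Sm i).image vtx) : Set (Fin N → ℝ)) := by
    refine Finset.mem_coe.mpr (Finset.mem_image_of_mem vtx ?_)
    rw [Sm, Finset.mem_filter, mem_oddF, card_triple hxz.symm hyz.symm hxy]
    refine ⟨⟨1, rfl⟩, by simp [hzi.symm, hxi.symm, hyi.symm, Ne.symm]⟩

  have h2 : vtx {z} ∈ (↑((Sm i).image vtx) : Set (Fin N → ℝ)) := by
    refine Finset.mem_coe.mpr (Finset.mem_image_of_mem vtx ?_)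
    rw [Sm, Finset.mem_filter, mem_oddF, Finset.card_singleton]
    exact ⟨odd_one, by simp [hzi.symm]⟩
  have := vsub_mem_vectorSpan ℝ h1 h2
  rwa [vsub_eq_sub, vtx_triple_sub_vtx_single hxz.symm hyz.symm hxy] at this

lemma vectorSpan_Sm (hN : 4 ≤ N) (i : Fin N) :
    vectorSpan ℝ (↑((Sm i).image vtx) : Set (Fin N → ℝ))
      = LinearMap.ker (lfun (Pi.single i 1)) := by
  apply le_antisymm
  · apply vectorSpan_le_ker (b := -(1/2))
    rintro x hx
    obtain ⟨J, hJ, rfl⟩ := Finset.mem_image.mp (Finset.mem_coe.mp hx)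
    rw [lfun_single_apply, vtx_apply, if_neg (Finset.mem_filter.mp hJ).2]
  · apply ker_single_le
    intro a ha
    obtain ⟨b, c, hbc, hbi, hba, hci, hca⟩ := exists_two_outside hN i a
    exact e_mem_of_pairs
      (pair_mem_Sm ha hbi hci hba.symm hca.symm hbc)
      (pair_mem_Sm ha hci hbi hca.symm hba.symm hbc.symm)
      (pair_mem_Sm hbi hci ha hbc hba hca)

def SH (I : Finset (Fin N)) : Finset (Finset (Fin N)) :=
  (oddF N).filter fun J => (symmDiff I J).card = 1

noncomputable def sig (I : Finset (Fin N)) : Fin N → ℝ := fun a => if a ∈ I then -1 else 1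

lemma vtx_symmDiff_single (I : Finset (Fin N)) (a : Fin N) :
    vtx (symmDiff I {a}) = vtx I + sig I a • e a := by
  funext p
  by_cases hp : p = a
  · subst hp
    by_cases hpI : p ∈ I <;>
      simp [vtx, Finset.mem_symmDiff, hpI, sig, e, Pi.single_apply] <;> norm_num
  · have hiff : p ∈ symmDiff I {a} ↔ p ∈ I := by
      simp only [Finset.mem_symmDiff, Finset.mem_singleton]
      tauto
    by_cases hpI : p ∈ I <;> by_cases haI : a ∈ I <;>
      simp [vtx, hiff, hpI, haI, sig, e, Pi.single_apply, hp]

lemma odd_card_symmDiff_single {I : Finset (Fin N)} (hI : Even I.card) (a : Fin N) :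
    Odd (symmDiff I {a}).card := by
  have h := card_symmDiff_add I {a}
  have h2 : (I ∩ {a}).card ≤ 1 := le_trans (Finset.card_le_card Finset.inter_subset_right) (by simp)
  rw [Finset.card_singleton] at h
  rw [Nat.even_iff] at hI
  rw [Nat.odd_iff]
  omega

lemma symmDiff_single_mem_SH {I : Finset (Fin N)} (hI : Even I.card) (a : Fin N) :
    symmDiff I {a} ∈ SH I := by
  rw [SH, Finset.mem_filter, mem_oddF]
  refine ⟨odd_card_symmDiff_single hI a, ?_⟩
  rw [symmDiff_symmDiff_cancel_left, Finset.card_singleton]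

lemma lfun_sgn_vtx (I J : Finset (Fin N)) :
    lfun (sgn I) (vtx J) = N / 2 - ((symmDiff I J).card : ℝ) := by
  have := Hfun_eq I (vtx J)
  rw [Hfun_vtx] at this
  linarith

lemma vectorSpan_SH (hN : 0 < N) {I : Finset (Fin N)} (hI : Even I.card) :
    vectorSpan ℝ (↑((SH I).image vtx) : Set (Fin N → ℝ))
      = LinearMap.ker (lfun (sgn I)) := by
  apply le_antisymm
  · apply vectorSpan_le_ker (b := N / 2 - 1)
    rintro x hx
    obtain ⟨J, hJ, rfl⟩ := Finset.mem_image.mp (Finset.mem_coe.mp hx)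
    rw [lfun_sgn_vtx, (Finset.mem_filter.mp hJ).2]
    norm_num
  · intro x hx
    rw [LinearMap.mem_ker] at hx
    set a₀ : Fin N := ⟨0, hN⟩
    have hmem : ∀ a : Fin N, vtx (symmDiff I {a})
        ∈ (↑((SH I).image vtx) : Set (Fin N → ℝ)) :=
      fun a => Finset.mem_coe.mpr (Finset.mem_image_of_mem vtx (symmDiff_single_mem_SH hI a))
    have hu : ∀ a : Fin N, sig I a • e a - sig I a₀ • e a₀
        ∈ vectorSpan ℝ (↑((SH I).image vtx) : Set (Fin N → ℝ)) := by
      intro a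
      have := vsub_mem_vectorSpan ℝ (hmem a) (hmem a₀)
      rwa [vsub_eq_sub, vtx_symmDiff_single, vtx_symmDiff_single,
        add_sub_add_left_eq_sub] at this
    have hsig_sq : ∀ a : Fin N, sig I a * sig I a = 1 := by
      intro a; by_cases ha : a ∈ I <;> simp [sig, ha]
    have hsum0 : ∑ a, sig I a * x a = 0 := by
      have : ∑ a, sig I a * x a = -lfun (sgn I) x := by
        rw [lfun_apply, ← Finset.sum_neg_distrib]
        refine Finset.sum_congr rfl fun a _ => ?_
        by_cases ha : a ∈ I <;> simp [sig, sgn, ha] <;> ring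
      rw [this, hx, neg_zero]
    have key : x = ∑ a, (sig I a * x a) • (sig I a • e a - sig I a₀ • e a₀) := by
      have h1 : ∑ a, (sig I a * x a) • (sig I a • e a) = x := by
        conv_rhs => rw [pi_sum_e x]
        refine Finset.sum_congr rfl fun a _ => ?_
        rw [smul_smul, mul_assoc, mul_comm (x a), ← mul_assoc, hsig_sq, one_mul]
      have h2 : ∑ a, (sig I a * x a) • (sig I a₀ • e a₀) = 0 := by
        rw [← Finset.sum_smul, hsum0, zero_smul]
      calc x = ∑ a, (sig I a * x a) • (sig I a • e a)
              - ∑ a, (sig I a * x a) • (sig I a₀ • e a₀) := by rw [h1, h2, sub_zero]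
        _ = ∑ a, (sig I a * x a) • (sig I a • e a - sig I a₀ • e a₀) := by
            rw [← Finset.sum_sub_distrib]
            exact Finset.sum_congr rfl fun a _ => (smul_sub _ _ _).symm
    rw [key]
    exact Submodule.sum_mem _ fun a _ => Submodule.smul_mem _ _ (hu a)

lemma hset_p (i : Fin N) :
    {x : Fin N → ℝ | x i = 1/2} = {x | lfun (Pi.single i 1) x = 1/2} := by
  ext x; rw [Set.mem_setOf_eq, Set.mem_setOf_eq, lfun_single_apply]

lemma hset_m (i : Fin N) :
    {x : Fin N → ℝ | x i = -(1/2)} = {x | lfun (-Pi.single i 1) x = 1/2} := by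
  ext x
  rw [Set.mem_setOf_eq, Set.mem_setOf_eq, show lfun (-Pi.single i 1) x = -x i from ?_]
  · constructor <;> intro h <;> linarith
  · have h : ∀ j, (-Pi.single i 1 : Fin N → ℝ) j * x j = -((Pi.single i 1 : Fin N → ℝ) j * x j) := by
      intro j; rw [Pi.neg_apply, neg_mul]
    rw [lfun_apply, Finset.sum_congr rfl fun j _ => h j, Finset.sum_neg_distrib]
    rw [show ∑ j, (Pi.single i 1 : Fin N → ℝ) j * x j = lfun (Pi.single i 1) x from rfl,
      lfun_single_apply]

lemma hset_H (I : Finset (Fin N)) :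
    {x : Fin N → ℝ | Hfun I x = 1} = {x | lfun (sgn I) x = N/2 - 1} := by
  ext x
  have := Hfun_eq I x
  rw [Set.mem_setOf_eq, Set.mem_setOf_eq]
  constructor <;> intro h <;> linarith

lemma hub_p (i : Fin N) : ∀ J : Finset (Fin N), Odd J.card →
    lfun (Pi.single i 1) (vtx J) ≤ 1/2 := by
  intro J _
  rw [lfun_single_apply, vtx_apply]
  split <;> norm_num

lemma hub_m (i : Fin N) : ∀ J : Finset (Fin N), Odd J.card →
    lfun (-Pi.single i 1) (vtx J) ≤ 1/2 := by
  intro J _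
  have h : ∀ j, (-Pi.single i 1 : Fin N → ℝ) j * vtx J j = -((Pi.single i 1 : Fin N → ℝ) j * vtx J j) := by
    intro j; rw [Pi.neg_apply, neg_mul]
  rw [lfun_apply, Finset.sum_congr rfl fun j _ => h j, Finset.sum_neg_distrib]
  rw [show ∑ j, (Pi.single i 1 : Fin N → ℝ) j * vtx J j = lfun (Pi.single i 1) (vtx J) from rfl,
    lfun_single_apply, vtx_apply]
  split <;> norm_num

lemma hub_H {I : Finset (Fin N)} (hI : Even I.card) : ∀ J : Finset (Fin N), Odd J.card →
    lfun (sgn I) (vtx J) ≤ N/2 - 1 := by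
  intro J hJ
  rw [lfun_sgn_vtx]
  have hne : (symmDiff I J).card ≠ 0 := by
    intro h0
    rw [Finset.card_eq_zero, ← Finset.bot_eq_empty, symmDiff_eq_bot] at h0
    subst h0
    rw [Nat.even_iff] at hI; rw [Nat.odd_iff] at hJ; omega
  have : (1:ℝ) ≤ ((symmDiff I J).card : ℝ) := by
    exact_mod_cast Nat.one_le_iff_ne_zero.mpr hne
  linarith

lemma filter_p (i : Fin N) :
    ((oddF N).filter fun J => lfun (Pi.single i 1) (vtx J) = 1/2) = Sp i := by
  apply Finset.filter_congr
  intro J _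
  rw [lfun_single_apply, vtx_apply]
  by_cases h : i ∈ J <;> simp [h] <;> norm_num

lemma filter_m (i : Fin N) :
    ((oddF N).filter fun J => lfun (-Pi.single i 1) (vtx J) = 1/2) = Sm i := by
  apply Finset.filter_congr
  intro J _
  have h : ∀ j, (-Pi.single i 1 : Fin N → ℝ) j * vtx J j = -((Pi.single i 1 : Fin N → ℝ) j * vtx J j) := by
    intro j; rw [Pi.neg_apply, neg_mul]
  rw [lfun_apply, Finset.sum_congr rfl fun j _ => h j, Finset.sum_neg_distrib]
  rw [show ∑ j, (Pi.single i 1 : Fin N → ℝ) j * vtx J j = lfun (Pi.single i 1) (vtx J) from rfl,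
    lfun_single_apply, vtx_apply]
  by_cases h : i ∈ J <;> simp [h] <;> norm_num

lemma filter_H (I : Finset (Fin N)) :
    ((oddF N).filter fun J => lfun (sgn I) (vtx J) = N/2 - 1) = SH I := by
  apply Finset.filter_congr
  intro J _
  rw [lfun_sgn_vtx]
  constructor
  · intro h
    have : ((symmDiff I J).card : ℝ) = 1 := by linarith
    exact_mod_cast this
  · intro h
    have : ((symmDiff I J).card : ℝ) = 1 := by exact_mod_cast h
    rw [this]

lemma lfun_neg (c : Fin N → ℝ) (x : Fin N → ℝ) : lfun (-c) x = -(lfun c x) := by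
  rw [lfun_apply, lfun_apply, ← Finset.sum_neg_distrib]
  exact Finset.sum_congr rfl fun i _ => by rw [Pi.neg_apply, neg_mul]

lemma ker_lfun_neg (c : Fin N → ℝ) : LinearMap.ker (lfun (-c)) = LinearMap.ker (lfun c) := by
  ext x
  simp only [LinearMap.mem_ker, lfun_neg, neg_eq_zero]

lemma single_ne_zero' (i : Fin N) : (Pi.single i 1 : Fin N → ℝ) ≠ 0 := by
  intro h
  have := congrFun h i
  simp at this

lemma mem_facets_p (hN : 4 ≤ N) (i : Fin N) :
    demicube N ∩ {x | x i = 1/2} ∈ demicubeFacets N := by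
  have hub := hub_p i
  have hD := demicube_le hub
  have hvi : vtx {i} ∈ demicube N ∩ {x : Fin N → ℝ | x i = 1/2} :=
    ⟨vtx_mem_demicube (by simp), by simp [vtx]⟩
  refine ⟨?_, ⟨vtx {i}, hvi⟩, ?_, ?_⟩
  · rw [hset_p]
    exact isExposed_face _ _ hD
  · intro hEq
    obtain ⟨j, _, _, hji, _, _⟩ := exists_two_outside hN i i
    have hmem : vtx {j} ∈ demicube N := vtx_mem_demicube (by simp)
    rw [← hEq] at hmem
    have := hmem.2
    simp only [Set.mem_setOf_eq, vtx_apply, Finset.mem_singleton] at this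
    rw [if_neg (Ne.symm hji)] at this
    norm_num at this
  · rw [hset_p, face_eq_hull hub, vectorSpan_convexHull', filter_p, vectorSpan_Sp hN,
      finrank_ker_lfun (single_ne_zero' i)]

lemma mem_facets_m (hN : 4 ≤ N) (i : Fin N) :
    demicube N ∩ {x | x i = -(1/2)} ∈ demicubeFacets N := by
  have hub := hub_m i
  have hD := demicube_le hub
  obtain ⟨j, _, _, hji, _, _⟩ := exists_two_outside hN i i
  have hvj : vtx {j} ∈ demicube N ∩ {x : Fin N → ℝ | x i = -(1/2)} :=
    ⟨vtx_mem_demicube (by simp), by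
      simp only [Set.mem_setOf_eq, vtx_apply, Finset.mem_singleton]
      rw [if_neg (Ne.symm hji)]⟩
  refine ⟨?_, ⟨vtx {j}, hvj⟩, ?_, ?_⟩
  · rw [hset_m]
    exact isExposed_face _ _ hD
  · intro hEq
    have hmem : vtx {i} ∈ demicube N := vtx_mem_demicube (by simp)
    rw [← hEq] at hmem
    have := hmem.2
    simp only [Set.mem_setOf_eq, vtx_apply, Finset.mem_singleton, if_pos rfl] at this
    norm_num at this
  · rw [hset_m, face_eq_hull hub, vectorSpan_convexHull', filter_m, vectorSpan_Sm hN,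
      finrank_ker_lfun (single_ne_zero' i)]

lemma sgn_ne_zero (hN : 0 < N) (I : Finset (Fin N)) : sgn I ≠ 0 := by
  intro h
  have := congrFun h ⟨0, hN⟩
  rw [sgn] at this
  split at this <;> simp_all

lemma mem_facets_H (hN : 4 ≤ N) {I : Finset (Fin N)} (hI : Even I.card) :
    demicube N ∩ {x | Hfun I x = 1} ∈ demicubeFacets N := by
  have h0 : (0:ℕ) < N := by omega
  have hub := hub_H (N := N) hI
  have hD := demicube_le hub
  set a₀ : Fin N := ⟨0, h0⟩
  have hva : vtx (symmDiff I {a₀}) ∈ demicube N ∩ {x : Fin N → ℝ | Hfun I x = 1} := by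
    refine ⟨vtx_mem_demicube (odd_card_symmDiff_single hI a₀), ?_⟩
    rw [Set.mem_setOf_eq, Hfun_vtx, symmDiff_symmDiff_cancel_left, Finset.card_singleton,
      Nat.cast_one]
  refine ⟨?_, ⟨_, hva⟩, ?_, ?_⟩
  · rw [hset_H]
    exact isExposed_face _ _ hD
  · intro hEq
    obtain ⟨b, c, hbc, hb0, _, hc0, _⟩ := exists_two_outside hN a₀ a₀
    set T : Finset (Fin N) := {a₀, b, c} with hT
    have hTcard : T.card = 3 := card_triple (Ne.symm hb0) (Ne.symm hc0) hbc
    have hodd : Odd (symmDiff I T).card := by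
      have h := card_symmDiff_add I T
      have h2 : (I ∩ T).card ≤ 3 := hTcard ▸ Finset.card_le_card Finset.inter_subset_right
      rw [hTcard] at h
      rw [Nat.even_iff] at hI; rw [Nat.odd_iff]; omega
    have hmem : vtx (symmDiff I T) ∈ demicube N := vtx_mem_demicube hodd
    rw [← hEq] at hmem
    have h3 := hmem.2
    rw [Set.mem_setOf_eq, Hfun_vtx, symmDiff_symmDiff_cancel_left, hTcard] at h3
    norm_num at h3
  · rw [hset_H, face_eq_hull hub, vectorSpan_convexHull', filter_H, vectorSpan_SH h0 hI,
      finrank_ker_lfun (sgn_ne_zero h0 I)]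

def toggle (J : Finset (Fin N)) (a : Fin N) : Finset (Fin N) :=
  if a ∈ J then J.erase a else insert a J

lemma toggle_card (J : Finset (Fin N)) (a : Fin N) :
    (toggle J a).card % 2 = (J.card + 1) % 2 := by
  rw [toggle]
  by_cases ha : a ∈ J
  · rw [if_pos ha, Finset.card_erase_of_mem ha]
    have : 1 ≤ J.card := Finset.card_pos.mpr ⟨a, ha⟩
    omega
  · rw [if_neg ha, Finset.card_insert_of_notMem ha]

lemma toggle_sum (c : Fin N → ℝ) (J : Finset (Fin N)) (a : Fin N) :
    ∑ i ∈ toggle J a, c i = ∑ i ∈ J, c i + (if a ∈ J then -(c a) else c a) := by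
  rw [toggle]
  by_cases ha : a ∈ J
  · rw [if_pos ha, if_pos ha]
    have := Finset.sum_erase_add J c ha
    linarith
  · rw [if_neg ha, if_neg ha, Finset.sum_insert ha]
    ring

lemma mem_toggle_of_ne {J : Finset (Fin N)} {a b : Fin N} (h : b ≠ a) :
    b ∈ toggle J a ↔ b ∈ J := by
  rw [toggle]
  by_cases ha : a ∈ J
  · rw [if_pos ha, Finset.mem_erase]
    exact ⟨fun h' => h'.2, fun h' => ⟨h, h'⟩⟩
  · rw [if_neg ha, Finset.mem_insert]
    exact ⟨fun h' => h'.resolve_left h, Or.inr⟩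

lemma toggle_eq_symmDiff (J : Finset (Fin N)) (a : Fin N) :
    toggle J a = symmDiff J {a} := by
  ext p
  rw [Finset.mem_symmDiff]
  by_cases hp : p = a
  · subst hp
    rw [toggle]
    by_cases hpJ : p ∈ J
    · rw [if_pos hpJ]; simp [hpJ]
    · rw [if_neg hpJ]; simp [hpJ]
  · rw [mem_toggle_of_ne hp]
    simp only [Finset.mem_singleton]
    tauto

lemma facets_subset (hN : 4 ≤ N) {F : Set (Fin N → ℝ)} (hF : F ∈ demicubeFacets N) :
    (∃ i : Fin N, F = demicube N ∩ {α | α i = 1/2} ∨ F = demicube N ∩ {α | α i = -(1/2)}) ∨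
    (∃ I : Finset (Fin N), Even I.card ∧ F = demicube N ∩ {α | Hfun I α = 1}) := by
  have h0 : (0:ℕ) < N := by omega
  obtain ⟨hex, hne, hneq, hdim⟩ := hF
  obtain ⟨c, b, hub, ⟨Jm, hJmodd, hJmb⟩, hFeq⟩ := exposed_eq_face h0 hex hne
  -- c is nonzero
  have hc : c ≠ 0 := by
    rintro rfl
    apply hneq
    have hb0 : b = 0 := by
      rw [← hJmb, lfun_apply]
      simp
    rw [hFeq, hb0]
    have : {x : Fin N → ℝ | lfun 0 x = 0} = Set.univ := by
      ext x; simp [lfun_apply]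
    rw [this, Set.inter_univ]
  -- vector span of F is the kernel of lfun c
  have hvsF : vectorSpan ℝ F = LinearMap.ker (lfun c) := by
    apply Submodule.eq_of_le_of_finrank_le
    · apply vectorSpan_le_ker (b := b)
      intro x hx
      rw [hFeq] at hx
      exact hx.2
    · rw [finrank_ker_lfun hc, hdim]
  set S := (oddF N).filter (fun J => lfun c (vtx J) = b) with hS
  have hJmS : Jm ∈ S := Finset.mem_filter.mpr ⟨mem_oddF.mpr hJmodd, hJmb⟩
  have hFhull : F = convexHull ℝ ↑(S.image vtx) := by
    rw [hFeq, face_eq_hull hub]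
  -- local optimality: toggling two coordinates cannot increase the value
  have claim0 : ∀ J ∈ S, ∀ a₁ a₂ : Fin N, a₁ ≠ a₂ →
      (if a₁ ∈ J then -(c a₁) else c a₁) + (if a₂ ∈ J then -(c a₂) else c a₂) ≤ 0 := by
    intro J hJ a₁ a₂ h12
    obtain ⟨hJodd, hJb⟩ := Finset.mem_filter.mp hJ
    rw [mem_oddF] at hJodd
    set K := toggle (toggle J a₁) a₂ with hK
    have hKodd : Odd K.card := by
      have h1 := toggle_card (toggle J a₁) a₂
      have h2 := toggle_card J a₁
      rw [← hK] at h1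
      rw [Nat.odd_iff] at hJodd ⊢
      omega
    have hKsum : ∑ i ∈ K, c i = ∑ i ∈ J, c i
        + (if a₁ ∈ J then -(c a₁) else c a₁) + (if a₂ ∈ J then -(c a₂) else c a₂) := by
      rw [hK, toggle_sum, toggle_sum]
      rw [if_congr (mem_toggle_of_ne h12.symm) rfl rfl]
    have hKle := hub K hKodd
    rw [lfun_vtx] at hKle hJb
    rw [hKsum] at hKle
    linarith
  -- if all vertices of S agree in coordinate k and some other coordinate is in the support,
  -- we get a contradiction with the dimension
  have hfix : ∀ k k' : Fin N, k ≠ k' → c k' ≠ 0 →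
      (∀ J ∈ S, ∀ J' ∈ S, vtx J k = vtx J' k) → False := by
    intro k k' hkk' hck' hag
    have h1 : vectorSpan ℝ F ≤ LinearMap.ker (lfun (Pi.single k 1)) := by
      rw [hFhull, vectorSpan_convexHull']
      apply vectorSpan_le_ker (b := vtx Jm k)
      rintro x hx
      obtain ⟨J, hJ, rfl⟩ := Finset.mem_image.mp (Finset.mem_coe.mp hx)
      rw [lfun_single_apply]
      exact hag J hJ Jm hJmS
    have h2 : (c k' • e k - c k • e k') ∈ LinearMap.ker (lfun c) := by
      rw [LinearMap.mem_ker, map_sub, map_smul, map_smul, e, e, lfun_single, lfun_single]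
      simp only [smul_eq_mul]
      ring
    rw [← hvsF] at h2
    have h3 := h1 h2
    rw [LinearMap.mem_ker, lfun_single_apply] at h3
    have h4 : (c k' • e k - c k • e k') k = c k' := by
      simp only [Pi.sub_apply, Pi.smul_apply, smul_eq_mul, e]
      rw [Pi.single_eq_same, Pi.single_eq_of_ne hkk', mul_one, mul_zero, sub_zero]
    rw [h4] at h3
    exact hck' h3
  by_cases hZ : ∃ z, c z = 0
  · -- some coordinate of c vanishes : coordinate facet
    obtain ⟨z, hz⟩ := hZ
    -- every positive coordinate is in every J ∈ S, negative ones are out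
    have hpos : ∀ J ∈ S, ∀ k, c k ≠ 0 → ((0 < c k → k ∈ J) ∧ (c k < 0 → k ∉ J)) := by
      intro J hJ k hk
      have hkz : k ≠ z := fun h => hk (h ▸ hz)
      have h := claim0 J hJ k z hkz
      have hz' : (if z ∈ J then -(c z) else c z) = 0 := by rw [hz]; simp
      rw [hz', add_zero] at h
      constructor
      · intro hck
        by_contra hkJ
        rw [if_neg hkJ] at h
        linarith
      · intro hck hkJ
        rw [if_pos hkJ] at h
        linarith
    obtain ⟨k', hk'⟩ : ∃ k', c k' ≠ 0 := by
      by_contra h; push_neg at h; exact hc (funext h)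
    by_cases hsupp : ∃ k'', k'' ≠ k' ∧ c k'' ≠ 0
    · -- two support coordinates and a zero coordinate: impossible
      exfalso
      obtain ⟨k'', hkne, hk''⟩ := hsupp
      apply hfix k' k'' (Ne.symm hkne) hk''
      intro J hJ J' hJ'
      rcases lt_or_gt_of_ne hk' with hlt | hgt
      · rw [vtx_apply, vtx_apply, if_neg ((hpos J hJ k' hk').2 hlt),
          if_neg ((hpos J' hJ' k' hk').2 hlt)]
      · rw [vtx_apply, vtx_apply, if_pos ((hpos J hJ k' hk').1 hgt),
          if_pos ((hpos J' hJ' k' hk').1 hgt)]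
    · -- support is exactly {k'} : coordinate facet
      push_neg at hsupp
      have hcj : ∀ j, j ≠ k' → c j = 0 := fun j hj => by
        by_contra h; exact h (hsupp j hj)
      have hlf : ∀ x, lfun c x = c k' * x k' := by
        intro x
        rw [lfun_apply, Finset.sum_eq_single k']
        · intro j _ hj; rw [hcj j hj, zero_mul]
        · intro h; exact absurd (Finset.mem_univ k') h
      left
      refine ⟨k', ?_⟩
      rcases lt_or_gt_of_ne hk' with hlt | hgt
      · -- c k' < 0 : facet x k' = -1/2
        right
        have hJmk : k' ∉ Jm := (hpos Jm hJmS k' hk').2 hlt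
        have hbval : b = c k' * (-(1/2)) := by
          rw [← hJmb, hlf, vtx_apply, if_neg hJmk]
        rw [hFeq]
        congr 1
        ext x
        rw [Set.mem_setOf_eq, Set.mem_setOf_eq, hlf, hbval]
        exact ⟨fun h => mul_left_cancel₀ hk' h, fun h => by rw [h]⟩
      · -- c k' > 0 : facet x k' = 1/2
        left
        have hJmk : k' ∈ Jm := (hpos Jm hJmS k' hk').1 hgt
        have hbval : b = c k' * (1/2) := by
          rw [← hJmb, hlf, vtx_apply, if_pos hJmk]
        rw [hFeq]
        congr 1
        ext x
        rw [Set.mem_setOf_eq, Set.mem_setOf_eq, hlf, hbval]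
        exact ⟨fun h => mul_left_cancel₀ hk' h, fun h => by rw [h]⟩
  · -- all coordinates of c are nonzero : H-facet
    push_neg at hZ
    set P := Finset.univ.filter (fun i => 0 < c i) with hP
    have hmemP : ∀ i, i ∈ P ↔ 0 < c i := by
      intro i; rw [hP, Finset.mem_filter]; simp
    have htpos : ∀ J : Finset (Fin N), ∀ a, a ∈ symmDiff P J →
        0 < (if a ∈ J then -(c a) else c a) := by
      intro J a ha
      rw [Finset.mem_symmDiff] at ha
      rcases ha with ⟨haP, haJ⟩ | ⟨haJ, haP⟩
      · rw [if_neg haJ]; exact (hmemP a).mp haP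
      · rw [if_pos haJ]
        have : c a < 0 := by
          rcases lt_trichotomy (c a) 0 with h | h | h
          · exact h
          · exact absurd h (hZ a)
          · exact absurd ((hmemP a).mpr h) haP
        linarith
    have claim1 : ∀ J ∈ S, (symmDiff P J).card ≤ 1 := by
      intro J hJ
      by_contra hcard
      push_neg at hcard
      obtain ⟨a₁, ha₁, a₂, ha₂, h12⟩ := Finset.one_lt_card.mp hcard
      have := claim0 J hJ a₁ a₂ h12
      have t1 := htpos J a₁ ha₁
      have t2 := htpos J a₂ ha₂
      linarith
    have hparity : ∀ J ∈ S, (symmDiff P J).card % 2 = (P.card + J.card) % 2 := by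
      intro J hJ
      have := card_symmDiff_add P J
      omega
    by_cases hPodd : Odd P.card
    · -- impossible: S = {P}, dimension 0
      exfalso
      have hSP : ∀ J ∈ S, J = P := by
        intro J hJ
        have h1 := claim1 J hJ
        have h2 := hparity J hJ
        have hJodd : Odd J.card := mem_oddF.mp (Finset.mem_filter.mp hJ).1
        rw [Nat.odd_iff] at hPodd hJodd
        have : (symmDiff P J).card = 0 := by omega
        rw [Finset.card_eq_zero, ← Finset.bot_eq_empty, symmDiff_eq_bot] at this
        exact this.symm
      have hSsing : S = {P} := by
        apply Finset.eq_singleton_iff_unique_mem.mpr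
        exact ⟨(hSP Jm hJmS) ▸ hJmS, hSP⟩
      have : vectorSpan ℝ F = ⊥ := by
        rw [hFhull, hSsing, Finset.image_singleton, Finset.coe_singleton,
          vectorSpan_convexHull', vectorSpan_singleton]
      rw [this, finrank_bot] at hdim
      omega
    · -- the H-facet case
      have hPeven : Even P.card := Nat.not_odd_iff_even.mp hPodd
      right
      have hSform : ∀ J ∈ S, ∃ a, J = symmDiff P {a} := by
        intro J hJ
        have h1 := claim1 J hJ
        have h2 := hparity J hJ
        have hJodd : Odd J.card := mem_oddF.mp (Finset.mem_filter.mp hJ).1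
        rw [Nat.even_iff] at hPeven
        rw [Nat.odd_iff] at hJodd
        have : (symmDiff P J).card = 1 := by omega
        obtain ⟨a, ha⟩ := Finset.card_eq_one.mp this
        refine ⟨a, ?_⟩
        have := congrArg (fun T => symmDiff P T) ha
        rwa [symmDiff_symmDiff_cancel_left] at this
      -- every flip of P is a vertex of F
      have hA : ∀ a : Fin N, symmDiff P {a} ∈ S := by
        by_contra hnA
        push_neg at hnA
        obtain ⟨a₀, ha₀⟩ := hnA
        have hag : ∀ J ∈ S, vtx J a₀ = vtx P a₀ := by
          intro J hJ
          obtain ⟨a, rfl⟩ := hSform J hJ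
          have haa : a₀ ≠ a := by rintro rfl; exact ha₀ hJ
          rw [vtx_symmDiff_single, Pi.add_apply, Pi.smul_apply, e,
            Pi.single_eq_of_ne haa, smul_zero, add_zero]
        obtain ⟨k', _, _, hk'ne, _, _⟩ := exists_two_outside hN a₀ a₀
        exact hfix a₀ k' (Ne.symm hk'ne) (hZ k')
          (fun J hJ J' hJ' => by rw [hag J hJ, hag J' hJ'])
      set μ := b + (∑ i, c i)/2 - ∑ i ∈ P, c i with hμ
      have hta : ∀ a : Fin N, (if a ∈ P then -(c a) else c a) = μ := by
        intro a
        have h := (Finset.mem_filter.mp (hA a)).2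
        rw [← toggle_eq_symmDiff, lfun_vtx, toggle_sum] at h
        rw [hμ]
        linarith
      have hμneg : μ < 0 := by
        have h := hta ⟨0, h0⟩
        by_cases hmem : (⟨0, h0⟩ : Fin N) ∈ P
        · rw [if_pos hmem] at h
          have := (hmemP _).mp hmem
          linarith
        · rw [if_neg hmem] at h
          have hne0 := hZ (⟨0, h0⟩ : Fin N)
          have : ¬(0 < c ⟨0, h0⟩) := fun hh => hmem ((hmemP _).mpr hh)
          have : c (⟨0, h0⟩ : Fin N) < 0 := by
            rcases lt_trichotomy (c ⟨0, h0⟩) 0 with hh | hh | hh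
            · exact hh
            · exact absurd hh hne0
            · exact absurd hh this
          linarith
      have hca : ∀ a : Fin N, c a = sgn P a * (-μ) := by
        intro a
        have h := hta a
        by_cases hmem : a ∈ P
        · rw [if_pos hmem] at h; rw [sgn, if_pos hmem]; linarith
        · rw [if_neg hmem] at h; rw [sgn, if_neg hmem]; linarith
      have hlfc : ∀ x : Fin N → ℝ, lfun c x = (-μ) * lfun (sgn P) x := by
        intro x
        rw [lfun_apply, lfun_apply, Finset.mul_sum]
        refine Finset.sum_congr rfl fun i _ => ?_
        rw [hca i]; ring
      have hbval : b = (-μ) * (N/2 - 1) := by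
        have h := (Finset.mem_filter.mp (hA ⟨0, h0⟩)).2
        rw [hlfc, lfun_sgn_vtx, symmDiff_symmDiff_cancel_left, Finset.card_singleton,
          Nat.cast_one] at h
        linarith
      refine ⟨P, hPeven, ?_⟩
      rw [hFeq]
      congr 1
      ext x
      rw [Set.mem_setOf_eq, Set.mem_setOf_eq, hlfc, hbval]
      have hμne : (-μ) ≠ 0 := by linarith
      have hHx := Hfun_eq P x
      constructor
      · intro h
        have := mul_left_cancel₀ hμne h
        linarith
      · intro h
        have : lfun (sgn P) x = N/2 - 1 := by linarith
        rw [this]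

lemma symmDiff_toggle (I : Finset (Fin N)) (a : Fin N) :
    symmDiff I (toggle I a) = {a} := by
  rw [toggle_eq_symmDiff, symmDiff_symmDiff_cancel_left]

lemma odd_card_toggle {I : Finset (Fin N)} (hI : Even I.card) (a : Fin N) :
    Odd (toggle I a).card := by
  rw [toggle_eq_symmDiff]
  exact odd_card_symmDiff_single hI a

lemma vtx_mem_facep {i : Fin N} {J : Finset (Fin N)} (hJ : Odd J.card) :
    vtx J ∈ demicube N ∩ {α : Fin N → ℝ | α i = 1/2} ↔ i ∈ J := by
  constructor
  · intro h
    have := h.2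
    rw [Set.mem_setOf_eq, vtx_apply] at this
    by_contra hi
    rw [if_neg hi] at this
    norm_num at this
  · intro hi
    exact ⟨vtx_mem_demicube hJ, by rw [Set.mem_setOf_eq, vtx_apply, if_pos hi]⟩

lemma vtx_mem_facem {i : Fin N} {J : Finset (Fin N)} (hJ : Odd J.card) :
    vtx J ∈ demicube N ∩ {α : Fin N → ℝ | α i = -(1/2)} ↔ i ∉ J := by
  constructor
  · intro h
    have := h.2
    rw [Set.mem_setOf_eq, vtx_apply] at this
    by_contra hi
    rw [if_pos hi] at this
    norm_num at this
  · intro hi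
    exact ⟨vtx_mem_demicube hJ, by rw [Set.mem_setOf_eq, vtx_apply, if_neg hi]⟩

lemma vtx_mem_faceH {I J : Finset (Fin N)} (hJ : Odd J.card) :
    vtx J ∈ demicube N ∩ {α : Fin N → ℝ | Hfun I α = 1} ↔ (symmDiff I J).card = 1 := by
  constructor
  · intro h
    have := h.2
    rw [Set.mem_setOf_eq, Hfun_vtx] at this
    exact_mod_cast this
  · intro h
    refine ⟨vtx_mem_demicube hJ, ?_⟩
    rw [Set.mem_setOf_eq, Hfun_vtx, h, Nat.cast_one]

lemma dist_pp (hN : 4 ≤ N) {i j : Fin N}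
    (h : demicube N ∩ {α : Fin N → ℝ | α i = 1/2} = demicube N ∩ {α | α j = 1/2}) :
    i = j := by
  by_contra hij
  have h1 : vtx {i} ∈ demicube N ∩ {α : Fin N → ℝ | α i = 1/2} :=
    (vtx_mem_facep (by simp)).mpr (Finset.mem_singleton_self i)
  rw [h] at h1
  have := (vtx_mem_facep (by simp)).mp h1
  rw [Finset.mem_singleton] at this
  exact hij this.symm

lemma dist_mm (hN : 4 ≤ N) {i j : Fin N}
    (h : demicube N ∩ {α : Fin N → ℝ | α i = -(1/2)} = demicube N ∩ {α | α j = -(1/2)}) :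
    i = j := by
  by_contra hij
  have h1 : vtx {j} ∈ demicube N ∩ {α : Fin N → ℝ | α i = -(1/2)} :=
    (vtx_mem_facem (by simp)).mpr (by rw [Finset.mem_singleton]; exact fun hh => hij hh)
  rw [h] at h1
  have := (vtx_mem_facem (by simp)).mp h1
  exact this (Finset.mem_singleton_self j)

lemma dist_pm (hN : 4 ≤ N) (i j : Fin N) :
    demicube N ∩ {α : Fin N → ℝ | α i = 1/2} ≠ demicube N ∩ {α | α j = -(1/2)} := by
  intro h
  by_cases hij : i = j
  · subst hij
    have h1 : vtx {i} ∈ demicube N ∩ {α : Fin N → ℝ | α i = 1/2} :=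
      (vtx_mem_facep (by simp)).mpr (Finset.mem_singleton_self i)
    rw [h] at h1
    exact (vtx_mem_facem (by simp)).mp h1 (Finset.mem_singleton_self i)
  · obtain ⟨k, _, _, hki, hkj, _⟩ := exists_two_outside hN i j
    have hcard : ({i, j, k} : Finset (Fin N)).card = 3 :=
      card_triple hij (Ne.symm hki) (by rintro rfl; exact hkj rfl)
    have hodd : Odd ({i, j, k} : Finset (Fin N)).card := by rw [hcard]; exact ⟨1, rfl⟩
    have h1 : vtx {i, j, k} ∈ demicube N ∩ {α : Fin N → ℝ | α i = 1/2} :=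
      (vtx_mem_facep hodd).mpr (by simp)
    rw [h] at h1
    exact (vtx_mem_facem hodd).mp h1 (by simp)

lemma dist_pH (hN : 4 ≤ N) (i : Fin N) {I : Finset (Fin N)} (hI : Even I.card) :
    demicube N ∩ {α : Fin N → ℝ | α i = 1/2} ≠ demicube N ∩ {α | Hfun I α = 1} := by
  intro h
  -- find an odd J with |I Δ J| = 1 and i ∉ J
  obtain ⟨J, hJodd, hJcard, hiJ⟩ :
      ∃ J : Finset (Fin N), Odd J.card ∧ (symmDiff I J).card = 1 ∧ i ∉ J := by
    by_cases hiI : i ∈ I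
    · refine ⟨toggle I i, odd_card_toggle hI i, by rw [symmDiff_toggle, Finset.card_singleton], ?_⟩
      rw [toggle, if_pos hiI]
      exact Finset.notMem_erase i I
    · rcases Finset.eq_empty_or_nonempty I with rfl | ⟨a, ha⟩
      · obtain ⟨k, _, _, hki, _, _⟩ := exists_two_outside hN i i
        refine ⟨{k}, by simp, ?_, by simpa using Ne.symm hki⟩
        rw [show symmDiff (∅ : Finset (Fin N)) {k} = {k} by simp]
        simp
      · refine ⟨toggle I a, odd_card_toggle hI a,
          by rw [symmDiff_toggle, Finset.card_singleton], ?_⟩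
        rw [toggle, if_pos ha, Finset.mem_erase]
        rintro ⟨_, hmem⟩
        exact hiI hmem
  have h1 : vtx J ∈ demicube N ∩ {α : Fin N → ℝ | Hfun I α = 1} :=
    (vtx_mem_faceH hJodd).mpr hJcard
  rw [← h] at h1
  exact hiJ ((vtx_mem_facep hJodd).mp h1)

lemma dist_mH (hN : 4 ≤ N) (i : Fin N) {I : Finset (Fin N)} (hI : Even I.card) :
    demicube N ∩ {α : Fin N → ℝ | α i = -(1/2)} ≠ demicube N ∩ {α | Hfun I α = 1} := by
  intro h
  obtain ⟨J, hJodd, hJcard, hiJ⟩ :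
      ∃ J : Finset (Fin N), Odd J.card ∧ (symmDiff I J).card = 1 ∧ i ∈ J := by
    by_cases hiI : i ∈ I
    · obtain ⟨a, _, _, hai, _, _⟩ := exists_two_outside hN i i
      refine ⟨toggle I a, odd_card_toggle hI a,
        by rw [symmDiff_toggle, Finset.card_singleton], ?_⟩
      rw [mem_toggle_of_ne (Ne.symm hai)]
      exact hiI
    · refine ⟨toggle I i, odd_card_toggle hI i, by rw [symmDiff_toggle, Finset.card_singleton], ?_⟩
      rw [toggle, if_neg hiI]
      exact Finset.mem_insert_self i I
  have h1 : vtx J ∈ demicube N ∩ {α : Fin N → ℝ | Hfun I α = 1} :=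
    (vtx_mem_faceH hJodd).mpr hJcard
  rw [← h] at h1
  exact (vtx_mem_facem hJodd).mp h1 hiJ

lemma dist_HH (hN : 4 ≤ N) {I I' : Finset (Fin N)} (hI : Even I.card) (hI' : Even I'.card)
    (h : demicube N ∩ {α : Fin N → ℝ | Hfun I α = 1} = demicube N ∩ {α | Hfun I' α = 1}) :
    I = I' := by
  by_contra hne
  have hd : symmDiff I I' ≠ ∅ := by
    rw [← Finset.bot_eq_empty, Ne, symmDiff_eq_bot]
    exact hne
  have hdcard : 2 ≤ (symmDiff I I').card := by
    have hpar := card_symmDiff_add I I'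
    have hpos : 0 < (symmDiff I I').card := Finset.card_pos.mpr (Finset.nonempty_of_ne_empty hd)
    rw [Nat.even_iff] at hI hI'
    omega
  -- choose x making |I' Δ (I Δ {x})| ≥ 3
  obtain ⟨x, hx⟩ :
      ∃ x : Fin N, (symmDiff I' (symmDiff I {x})).card ≠ 1 := by
    have hassoc : ∀ x : Fin N, symmDiff I' (symmDiff I {x}) = symmDiff (symmDiff I' I) {x} := by
      intro x; rw [symmDiff_assoc]
    by_cases hall : symmDiff I I' = Finset.univ
    · refine ⟨⟨0, by omega⟩, ?_⟩
      rw [hassoc, symmDiff_comm I' I, hall]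
      have hmem : (⟨0, by omega⟩ : Fin N) ∈ (Finset.univ : Finset (Fin N)) := Finset.mem_univ _
      rw [show symmDiff (Finset.univ : Finset (Fin N)) {(⟨0, by omega⟩ : Fin N)}
          = Finset.univ.erase ⟨0, by omega⟩ from ?_]
      · rw [Finset.card_erase_of_mem hmem, Finset.card_univ, Fintype.card_fin]
        omega
      · rw [← toggle_eq_symmDiff, toggle, if_pos hmem]
    · obtain ⟨x, hxmem⟩ : ∃ x, x ∉ symmDiff I I' := by
        by_contra hcon
        push_neg at hcon
        exact hall (Finset.eq_univ_iff_forall.mpr hcon)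
      refine ⟨x, ?_⟩
      rw [hassoc, symmDiff_comm I' I, ← toggle_eq_symmDiff, toggle, if_neg hxmem,
        Finset.card_insert_of_notMem hxmem]
      omega
  have h1 : vtx (symmDiff I {x}) ∈ demicube N ∩ {α : Fin N → ℝ | Hfun I α = 1} :=
    (vtx_mem_faceH (odd_card_symmDiff_single hI x)).mpr
      (by rw [symmDiff_symmDiff_cancel_left, Finset.card_singleton])
  rw [h] at h1
  exact hx ((vtx_mem_faceH (odd_card_symmDiff_single hI x)).mp h1)

lemma even_card_symmDiff_single {I : Finset (Fin N)} (hI : Odd I.card) (a : Fin N) :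
    Even (symmDiff I {a}).card := by
  have h := card_symmDiff_add I {a}
  have h2 : (I ∩ {a}).card ≤ 1 := le_trans (Finset.card_le_card Finset.inter_subset_right) (by simp)
  rw [Finset.card_singleton] at h
  rw [Nat.odd_iff] at hI
  rw [Nat.even_iff]
  omega

lemma card_even_subsets (hN : 0 < N) :
    Nat.card {I : Finset (Fin N) // Even I.card} = 2^(N-1) := by
  set a₀ : Fin N := ⟨0, hN⟩
  have heqv : {I : Finset (Fin N) // Even I.card} ≃ {I : Finset (Fin N) // ¬Even I.card} :=
    { toFun := fun I => ⟨symmDiff I.1 {a₀},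
        Nat.not_even_iff_odd.mpr (odd_card_symmDiff_single I.2 a₀)⟩
      invFun := fun I => ⟨symmDiff I.1 {a₀},
        even_card_symmDiff_single (Nat.not_even_iff_odd.mp I.2) a₀⟩
      left_inv := fun I => Subtype.ext (symmDiff_symmDiff_cancel_right {a₀} I.1)
      right_inv := fun I => Subtype.ext (symmDiff_symmDiff_cancel_right {a₀} I.1) }
  have hcompl := Fintype.card_subtype_compl (fun I : Finset (Fin N) => Even I.card)
  have hcong := Fintype.card_congr heqv
  have htot : Fintype.card (Finset (Fin N)) = 2^N := by
    rw [Fintype.card_finset, Fintype.card_fin]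
  have hpow : 2^N = 2 * 2^(N-1) := by
    conv_lhs => rw [show N = (N-1) + 1 by omega]
    rw [pow_succ]
    ring
  rw [Nat.card_eq_fintype_card]
  have hle : Fintype.card {I : Finset (Fin N) // Even I.card}
      ≤ Fintype.card (Finset (Fin N)) := Fintype.card_subtype_le _
  omega

def faceIdx (N : ℕ) := (Fin N × Bool) ⊕ {I : Finset (Fin N) // Even I.card}

noncomputable def faceOf : faceIdx N → Set (Fin N → ℝ)
  | Sum.inl (i, true) => demicube N ∩ {α | α i = 1/2}
  | Sum.inl (i, false) => demicube N ∩ {α | α i = -(1/2)}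
  | Sum.inr I => demicube N ∩ {α | Hfun I.1 α = 1}

lemma faceOf_inj (hN : 4 ≤ N) : Function.Injective (faceOf (N := N)) := by
  rintro (⟨i, (_|_)⟩ | ⟨I, hI⟩) (⟨j, (_|_)⟩ | ⟨J, hJ⟩) h <;>
    simp only [faceOf] at h
  · rw [dist_mm hN h]
  · exact absurd h.symm (dist_pm hN j i)
  · exact absurd h (dist_mH hN i hJ)
  · exact absurd h (dist_pm hN i j)
  · rw [dist_pp hN h]
  · exact absurd h (dist_pH hN i hJ)
  · exact absurd h.symm (dist_mH hN j hI)
  · exact absurd h.symm (dist_pH hN j hI)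
  · apply congrArg Sum.inr
    exact Subtype.ext (dist_HH hN hI hJ h)

lemma range_faceOf (hN : 4 ≤ N) :
    demicubeFacets N = Set.range (faceOf (N := N)) := by
  ext F
  constructor
  · intro hF
    rcases facets_subset hN hF with ⟨i, h | h⟩ | ⟨I, hI, h⟩
    · exact ⟨Sum.inl (i, true), h.symm⟩
    · exact ⟨Sum.inl (i, false), h.symm⟩
    · exact ⟨Sum.inr ⟨I, hI⟩, h.symm⟩
  · rintro ⟨(⟨i, (_|_)⟩ | ⟨I, hI⟩), rfl⟩
    · exact mem_facets_m hN i
    · exact mem_facets_p hN i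
    · exact mem_facets_H hN hI

end Demi

/-- The `N`-dimensional demihypercube (`N ≥ 4`) has exactly `2^{N-1} + 2N` facets:
`2N` supported on the hyperplanes `α_i = ±1/2` and `2^{N-1}` supported on the
hyperplanes `H_I = 1` for `I` of even cardinality. -/
theorem stmt_3 (N : ℕ) (hN : 4 ≤ N) :
    demicubeFacets N
      = ({F | ∃ i : Fin N, F = demicube N ∩ {α | α i = 1/2} ∨
            F = demicube N ∩ {α | α i = -(1/2)}}
        ∪ {F | ∃ I : Finset (Fin N), Even I.card ∧
            F = demicube N ∩ {α | Hfun I α = 1}}) ∧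
    Nat.card (demicubeFacets N) = 2^(N-1) + 2*N := by
  constructor
  · ext F
    constructor
    · intro hF
      rcases Demi.facets_subset hN hF with ⟨i, h⟩ | ⟨I, hI, h⟩
      · exact Or.inl ⟨i, h⟩
      · exact Or.inr ⟨I, hI, h⟩
    · rintro (⟨i, h | h⟩ | ⟨I, hI, h⟩) <;> subst h
      · exact Demi.mem_facets_p hN i
      · exact Demi.mem_facets_m hN i
      · exact Demi.mem_facets_H hN hI
  · rw [Demi.range_faceOf hN, Nat.card_range_of_injective (Demi.faceOf_inj hN)]
    rw [Demi.faceIdx, Nat.card_sum, Nat.card_prod, Nat.card_eq_fintype_card,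
      Nat.card_eq_fintype_card, Fintype.card_fin, Fintype.card_bool,
      Demi.card_even_subsets (by omega)]
    ring
end

section
/- For I of even cardinality, the facet of the demihypercube Δ supported on the hyperplane (H_I = 1) is an (N-1)-dimensional simplex, namely the convex hull of the N vertices v_J with |J| odd at graph distance 1 from v_I (i.e., with |I Δ J| = 1). -/
open Finset

lemma Hfun_eq {N : ℕ} (I : Finset (Fin N)) (α : Fin N → ℝ) :
    Hfun I α = (N:ℝ)/2 + (∑ j ∈ Iᶜ, α j - ∑ i ∈ I, α i) := by
  unfold Hfun
  rw [Finset.sum_add_distrib, Finset.sum_sub_distrib]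
  have hc : ((Iᶜ.card : ℝ) + I.card) = N := by
    rw [Finset.card_compl]
    have := Finset.card_le_univ I
    push_cast [Nat.cast_sub this]
    simp
  simp only [Finset.sum_const, nsmul_eq_mul]
  nlinarith [hc]

lemma Hfun_vtx {N : ℕ} (I J : Finset (Fin N)) :
    Hfun I (vtx J) = ((I \ J).card + (J \ I).card : ℕ) := by
  unfold Hfun vtx
  have h1 : ∑ j ∈ Iᶜ, ((1:ℝ)/2 + if j ∈ J then 1/2 else -(1/2))
      = ∑ j ∈ Iᶜ, (if j ∈ J then (1:ℝ) else 0) := by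
    refine Finset.sum_congr rfl fun j _ => ?_
    split <;> norm_num
  have h2 : ∑ i ∈ I, ((1:ℝ)/2 - if i ∈ J then 1/2 else -(1/2))
      = ∑ i ∈ I, (if i ∉ J then (1:ℝ) else 0) := by
    refine Finset.sum_congr rfl fun j _ => ?_
    by_cases h : j ∈ J <;> simp [h] <;> norm_num
  rw [h1, h2, Finset.sum_boole, Finset.sum_boole]
  have e1 : Iᶜ.filter (· ∈ J) = J \ I := by ext a; simp [Finset.mem_sdiff, and_comm]
  have e2 : I.filter (· ∉ J) = I \ J := by ext a; simp [Finset.mem_sdiff]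
  rw [e1, e2]
  push_cast; ring

lemma Hfun_comb {N : ℕ} (I : Finset (Fin N)) {ι : Type*} (t : Finset ι) (w : ι → ℝ)
    (z : ι → Fin N → ℝ) (hw : ∑ i ∈ t, w i = 1) :
    Hfun I (∑ i ∈ t, w i • z i) = ∑ i ∈ t, w i * Hfun I (z i) := by
  have hr : ∑ i ∈ t, w i * Hfun I (z i)
      = ∑ i ∈ t, (w i * ((N:ℝ)/2) + (∑ j ∈ Iᶜ, w i * z i j - ∑ j ∈ I, w i * z i j)) := by
    refine Finset.sum_congr rfl fun i _ => ?_
    rw [Hfun_eq, mul_add, mul_sub, Finset.mul_sum, Finset.mul_sum]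
  rw [hr, Finset.sum_add_distrib, ← Finset.sum_mul, hw, one_mul, Finset.sum_sub_distrib,
      Finset.sum_comm, Finset.sum_comm (s := t) (t := I), Hfun_eq]
  congr 1
  congr 1 <;> exact Finset.sum_congr rfl fun j _ => by simp [Finset.sum_apply]

lemma odd_symm' {N : ℕ} {I J : Finset (Fin N)} (hI : Even I.card) (hJ : Odd J.card) :
    Odd ((I \ J).card + (J \ I).card) := by
  have h1 : (I \ J).card + (I ∩ J).card = I.card := Finset.card_sdiff_add_card_inter I J
  have h2 : (J \ I).card + (J ∩ I).card = J.card := Finset.card_sdiff_add_card_inter J I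
  have h3 : (I ∩ J).card = (J ∩ I).card := by rw [Finset.inter_comm]
  obtain ⟨a, ha⟩ := hI
  obtain ⟨b, hb⟩ := hJ
  refine ⟨a + b - (I ∩ J).card, by omega⟩

/-- For `I` of even cardinality, the facet of the demihypercube supported on
`(H_I = 1)` is the simplex spanned by the `N` odd vertices `v_J` at graph
distance `1` from `v_I` (i.e. with `|I Δ J| = 1`). -/
theorem stmt_4 (N : ℕ) (hN : 4 ≤ N) (I : Finset (Fin N)) (hI : Even I.card) :
    demicube N ∩ {α | Hfun I α = 1}
      = convexHull ℝ {x : Fin N → ℝ | ∃ J : Finset (Fin N), Odd J.card ∧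
          (I \ J).card + (J \ I).card = 1 ∧ x = vtx J} := by
  apply Set.Subset.antisymm
  · rintro x ⟨hx, hx1⟩
    rw [demicube, _root_.convexHull_eq] at hx
    obtain ⟨ι, t, w, z, hw0, hw1, hz, hxe⟩ := hx
    rw [Finset.centerMass_eq_of_sum_1 _ _ hw1] at hxe
    simp only [Set.mem_setOf_eq] at hx1 hz
    choose J hJodd hJeq using hz
    -- each Hfun value is ≥ 1
    have hge : ∀ i ∈ t, (1:ℝ) ≤ Hfun I (z i) := by
      intro i hi
      rw [hJeq i hi, Hfun_vtx]
      exact_mod_cast Nat.one_le_cast.mpr (odd_symm' hI (hJodd i hi)).pos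
    have hsum : ∑ i ∈ t, w i * Hfun I (z i) = 1 := by
      rw [← Hfun_comb I t w z hw1, hxe]; exact hx1
    have hzero : ∀ i ∈ t, w i ≠ 0 → Hfun I (z i) = 1 := by
      have h0 : ∑ i ∈ t, w i * (Hfun I (z i) - 1) = 0 := by
        simp only [mul_sub, mul_one, Finset.sum_sub_distrib, hsum, hw1, sub_self]
      have := (Finset.sum_eq_zero_iff_of_nonneg (fun i hi =>
        mul_nonneg (hw0 i hi) (by linarith [hge i hi]))).mp h0
      intro i hi hwi
      have := this i hi
      rcases mul_eq_zero.mp this with h | h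
      · exact absurd h hwi
      · linarith
    set S' : Set (Fin N → ℝ) := {x : Fin N → ℝ | ∃ J : Finset (Fin N), Odd J.card ∧
          (I \ J).card + (J \ I).card = 1 ∧ x = vtx J} with hS'
    set t' := t.filter (fun i => w i ≠ 0) with ht'
    have hw1' : ∑ i ∈ t', w i = 1 := by
      rw [ht', Finset.sum_filter_ne_zero, hw1]
    have hmem : t'.centerMass w z ∈ convexHull ℝ S' := by
      refine Finset.centerMass_mem_convexHull t'
        (fun i hi => hw0 i (Finset.mem_filter.mp hi).1) (by rw [hw1']; norm_num)
        (fun i hi => ?_)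
      obtain ⟨hit, hwi⟩ := Finset.mem_filter.mp hi
      refine ⟨J i hit, hJodd i hit, ?_, hJeq i hit⟩
      have h1 : Hfun I (z i) = 1 := hzero i hit hwi
      rw [hJeq i hit, Hfun_vtx] at h1
      exact_mod_cast h1
    have hcm : t'.centerMass w z = x := by
      rw [Finset.centerMass_eq_of_sum_1 _ _ hw1', ht',
        Finset.sum_filter_of_ne (fun i _ h => by
          intro hw0'; exact h (by rw [hw0', zero_smul]))]
      exact hxe
    rwa [hcm] at hmem
  · apply Set.subset_inter
    · exact convexHull_mono (fun x ⟨J, hJ, _, hx⟩ => ⟨J, hJ, hx⟩)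
    · apply convexHull_min
      · rintro x ⟨J, hJodd, hcard, rfl⟩
        show Hfun I (vtx J) = 1
        rw [Hfun_vtx, hcard]; norm_num
      · intro x hx y hy a b ha hb hab
        show Hfun I (a • x + b • y) = 1
        have : a • x + b • y = ∑ i ∈ (Finset.univ : Finset (Fin 2)), ![a,b] i • ![x,y] i := by
          simp [Fin.sum_univ_two]
        rw [this, Hfun_comb I _ _ _ (by simp [Fin.sum_univ_two, hab]), Fin.sum_univ_two]
        simp only [Matrix.cons_val_zero, Matrix.cons_val_one, Matrix.head_cons]
        rw [hx, hy]; ring_nf; linarith [hab]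
end
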